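/- The functions ψ₀(r) = r²/(1+r²)² and ψ₁(r) = (r⁴ + 4r² log r − 1)/(1+r²)² are solutions on (0,∞) of the homogeneous linear ODE L₀ m = 0, where L₀ m = −m'' − ((3r²−1)/(r(1+r²))) m' − (8/(1+r²)²) m. -/

import Mathlib

open Real

noncomputable def psi0 (r : ℝ) : ℝ := r ^ 2 / (1 + r ^ 2) ^ 2

noncomputable def psi1 (r : ℝ) : ℝ := (r ^ 4 + 4 * r ^ 2 * Real.log r - 1) / (1 + r ^ 2) ^ 2

/-- The linearized partial-mass operator `L₀m = -m'' - ((3r²-1)/(r(1+r²)))m' - (8/(1+r²)²)m`. -/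
noncomputable def L0 (m : ℝ → ℝ) (r : ℝ) : ℝ :=
  -(deriv (deriv m) r) - ((3 * r ^ 2 - 1) / (r * (1 + r ^ 2))) * deriv m r
    - (8 / (1 + r ^ 2) ^ 2) * m r

noncomputable def d0 (r : ℝ) : ℝ := (2 * r - 2 * r ^ 3) / (1 + r ^ 2) ^ 3

noncomputable def d1 (r : ℝ) : ℝ :=
  (8 * r + 8 * r ^ 3 + (8 * r - 8 * r ^ 3) * Real.log r) / (1 + r ^ 2) ^ 3

lemma hden (r : ℝ) (n : ℕ) : ((1 + r ^ 2) ^ n : ℝ) ≠ 0 := by positivity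

lemma hasDerivAt_den (r : ℝ) (n : ℕ) :
    HasDerivAt (fun r : ℝ => (1 + r ^ 2) ^ n) ((n : ℝ) * (1 + r ^ 2) ^ (n - 1) * (2 * r)) r := by
  have h : HasDerivAt (fun r : ℝ => 1 + r ^ 2) (2 * r) r := by
    simpa using (hasDerivAt_pow 2 r).const_add 1
  exact h.pow n

lemma hasDerivAt_psi0 (r : ℝ) : HasDerivAt psi0 (d0 r) r := by
  have hnum : HasDerivAt (fun r : ℝ => r ^ 2) (2 * r) r := by simpa using hasDerivAt_pow 2 r
  have h := hnum.div (hasDerivAt_den r 2) (hden r 2)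
  refine h.congr_deriv ?_
  have h1 : ((1 + r ^ 2) ^ 1 : ℝ) ≠ 0 := hden r 1
  unfold d0
  field_simp [d0]
  ring

lemma hasDerivAt_d0 (r : ℝ) :
    HasDerivAt d0 ((2 - 16 * r ^ 2 + 6 * r ^ 4) / (1 + r ^ 2) ^ 4) r := by
  have hnum : HasDerivAt (fun r : ℝ => 2 * r - 2 * r ^ 3) (2 - 6 * r ^ 2) r := by
    have h := ((hasDerivAt_id r).const_mul (2 : ℝ)).sub ((hasDerivAt_pow 3 r).const_mul (2 : ℝ))
    refine h.congr_deriv ?_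
    push_cast
    ring
  have h := hnum.div (hasDerivAt_den r 3) (hden r 3)
  refine h.congr_deriv ?_
  have h1 : ((1 + r ^ 2) ^ 1 : ℝ) ≠ 0 := hden r 1
  field_simp
  ring

lemma hasDerivAt_psi1 (r : ℝ) (hr : 0 < r) : HasDerivAt psi1 (d1 r) r := by
  have hl : HasDerivAt Real.log r⁻¹ r := Real.hasDerivAt_log hr.ne'
  have hnum : HasDerivAt (fun r : ℝ => r ^ 4 + 4 * r ^ 2 * Real.log r - 1)
      (4 * r ^ 3 + (8 * r * Real.log r + 4 * r)) r := by
    have h1 := hasDerivAt_pow 4 r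
    have h2 := ((hasDerivAt_pow 2 r).const_mul (4 : ℝ)).mul hl
    have h4 := (h1.add h2).sub_const 1
    refine h4.congr_deriv ?_
    push_cast
    field_simp
    ring
  have h := hnum.div (hasDerivAt_den r 2) (hden r 2)
  refine h.congr_deriv ?_
  have h1 : ((1 + r ^ 2) ^ 1 : ℝ) ≠ 0 := hden r 1
  unfold d1
  field_simp [d1]
  ring

lemma hasDerivAt_d1 (r : ℝ) (hr : 0 < r) :
    HasDerivAt d1
      (((16 + 16 * r ^ 2 + (8 - 24 * r ^ 2) * Real.log r) * (1 + r ^ 2)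
          - 6 * r * (8 * r + 8 * r ^ 3 + (8 * r - 8 * r ^ 3) * Real.log r))
        / (1 + r ^ 2) ^ 4) r := by
  have hl : HasDerivAt Real.log r⁻¹ r := Real.hasDerivAt_log hr.ne'
  have hg : HasDerivAt (fun r : ℝ => 8 * r + 8 * r ^ 3 + (8 * r - 8 * r ^ 3) * Real.log r)
      (16 + 16 * r ^ 2 + (8 - 24 * r ^ 2) * Real.log r) r := by
    have h1 := (hasDerivAt_id r).const_mul (8 : ℝ)
    have h2 := (hasDerivAt_pow 3 r).const_mul (8 : ℝ)
    have h3 := (((hasDerivAt_id r).const_mul (8 : ℝ)).sub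
      ((hasDerivAt_pow 3 r).const_mul (8 : ℝ))).mul hl
    have h4 := (h1.add h2).add h3
    refine h4.congr_deriv ?_
    push_cast
    simp only [Pi.sub_apply, id]
    field_simp
    ring
  have h := hg.div (hasDerivAt_den r 3) (hden r 3)
  refine h.congr_deriv ?_
  have h1 : ((1 + r ^ 2) ^ 1 : ℝ) ≠ 0 := hden r 1
  field_simp
  ring

/-- `ψ₀(r) = r²/(1+r²)²` and `ψ₁(r) = (r⁴+4r²log r−1)/(1+r²)²` solve `L₀m = 0` on `(0,∞)`. -/
theorem psi0_psi1_solve_L0 (r : ℝ) (hr : 0 < r) : L0 psi0 r = 0 ∧ L0 psi1 r = 0 := by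
  have hne : (1 : ℝ) + r ^ 2 ≠ 0 := by positivity
  constructor
  · have hd : deriv psi0 = d0 := funext fun x => (hasDerivAt_psi0 x).deriv
    unfold L0
    rw [hd, (hasDerivAt_d0 r).deriv]
    simp only [psi0, d0]
    field_simp
    ring
  · have hev : deriv psi1 =ᶠ[nhds r] d1 := by
      filter_upwards [Ioi_mem_nhds hr] with x hx
      exact (hasDerivAt_psi1 x hx).deriv
    unfold L0
    rw [hev.deriv_eq, (hasDerivAt_d1 r hr).deriv, (hasDerivAt_psi1 r hr).deriv]
    simp only [psi1, d1]
    field_simp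
    ring
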